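/- Consider a path v1v2v3v4v5 on 5 vertices with lists over a finite color set, with |L(v1)| ≥ 2, |L(v2)| ≥ 2, |L(v3)| ≥ 4, |L(v4)| ≥ 2, |L(v5)| ≥ 2. Then either the path is 2-distance list colorable, or there exist four distinct colors a, b, c, d such that L(v1) = L(v2) = {a,b}, L(v4) = L(v5) = {c,d}, and L(v3) = {a,b,c,d}. -/
import Mathlib

private lemma card3aux (a b c : ℕ) : ({a, b, c} : Finset ℕ).card ≤ 3 := by
  have h1 := Finset.card_insert_le a ({b, c} : Finset ℕ)
  have h2 := Finset.card_insert_le b ({c} : Finset ℕ)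
  have h3 : ({c} : Finset ℕ).card = 1 := Finset.card_singleton c
  have e1 : ({a, b, c} : Finset ℕ) = insert a {b, c} := rfl
  have e2 : ({b, c} : Finset ℕ) = insert b {c} := rfl
  omega

private lemma card4aux (a b c d : ℕ) : ({a, b, c, d} : Finset ℕ).card ≤ 4 := by
  have h1 := Finset.card_insert_le a ({b, c, d} : Finset ℕ)
  have h2 := card3aux b c d
  have e1 : ({a, b, c, d} : Finset ℕ) = insert a {b, c, d} := rfl
  omega

private lemma distinct4aux {a b c d : ℕ} (h : 4 ≤ ({a, b, c, d} : Finset ℕ).card) :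
    a ≠ b ∧ a ≠ c ∧ a ≠ d ∧ b ≠ c ∧ b ≠ d ∧ c ≠ d := by
  have H : ∀ x y z : ℕ, ({a, b, c, d} : Finset ℕ) ⊆ {x, y, z} → False := by
    intro x y z hs
    have h1 := Finset.card_le_card hs
    have h2 := card3aux x y z
    omega
  refine ⟨?_, ?_, ?_, ?_, ?_, ?_⟩ <;> rintro rfl
  · exact H a c d (by intro x hx; simp at hx ⊢; tauto)
  · exact H a b d (by intro x hx; simp at hx ⊢; tauto)
  · exact H a b c (by intro x hx; simp at hx ⊢; tauto)
  · exact H a b d (by intro x hx; simp at hx ⊢; tauto)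
  · exact H a b c (by intro x hx; simp at hx ⊢; tauto)
  · exact H a b c (by intro x hx; simp at hx ⊢; tauto)

/-- A path `v1 … v5` with list sizes at least 2, 2, 4, 2, 2: either it admits a
2-distance list coloring, or there are four distinct colors `a b c d` with
`L(v1) = L(v2) = {a,b}`, `L(v4) = L(v5) = {c,d}` and `L(v3) = {a,b,c,d}`. -/
theorem stmt7 (L : Fin 5 → Finset ℕ)
    (h0 : 2 ≤ (L 0).card) (h1 : 2 ≤ (L 1).card) (h2 : 4 ≤ (L 2).card)
    (h3 : 2 ≤ (L 3).card) (h4 : 2 ≤ (L 4).card) :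
    (∃ c : Fin 5 → ℕ, (∀ i, c i ∈ L i) ∧
      ∀ i j : Fin 5, i.val < j.val → j.val ≤ i.val + 2 → c i ≠ c j) ∨
    (∃ a b c d : ℕ, a ≠ b ∧ a ≠ c ∧ a ≠ d ∧ b ≠ c ∧ b ≠ d ∧ c ≠ d ∧
      L 0 = {a, b} ∧ L 1 = {a, b} ∧ L 3 = {c, d} ∧ L 4 = {c, d} ∧
      L 2 = {a, b, c, d}) := by
  rw [or_iff_not_imp_left]
  intro hnc
  -- Key: for any valid quadruple, L 2 is contained in its value set.
  have key : ∀ x1 ∈ L 0, ∀ x2 ∈ L 1, ∀ x4 ∈ L 3, ∀ x5 ∈ L 4,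
      x1 ≠ x2 → x2 ≠ x4 → x4 ≠ x5 → L 2 ⊆ ({x1, x2, x4, x5} : Finset ℕ) := by
    intro x1 m1 x2 m2 x4 m4 x5 m5 d12 d24 d45 z hz
    by_contra hzn
    simp only [Finset.mem_insert, Finset.mem_singleton, not_or] at hzn
    obtain ⟨z1, z2, z4, z5⟩ := hzn
    refine hnc ⟨fun i => if i.val = 0 then x1 else if i.val = 1 then x2 else
      if i.val = 2 then z else if i.val = 3 then x4 else x5, ?_, ?_⟩
    · rintro ⟨iv, hi⟩
      interval_cases iv <;> simpa
    · rintro ⟨iv, hi⟩ ⟨jv, hj⟩ hlt hle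
      simp only at hlt hle
      interval_cases iv <;> interval_cases jv <;> simp_all <;>
        first | exact fun h => z1 h.symm | exact fun h => z2 h.symm
  have keyR : ∀ s : Finset ℕ, L 2 ⊆ s → s.card ≤ 3 → False := by
    intro s hsub hc
    have := Finset.card_le_card hsub
    omega
  have keyC : ∀ x1 ∈ L 0, ∀ x2 ∈ L 1, ∀ x4 ∈ L 3, ∀ x5 ∈ L 4,
      x1 ≠ x2 → x2 ≠ x4 → x4 ≠ x5 →
      L 2 = {x1, x2, x4, x5} ∧
        (x1 ≠ x2 ∧ x1 ≠ x4 ∧ x1 ≠ x5 ∧ x2 ≠ x4 ∧ x2 ≠ x5 ∧ x4 ≠ x5) := by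
    intro x1 m1 x2 m2 x4 m4 x5 m5 d12 d24 d45
    have hsub := key x1 m1 x2 m2 x4 m4 x5 m5 d12 d24 d45
    have hcard := Finset.card_le_card hsub
    have h4' : 4 ≤ ({x1, x2, x4, x5} : Finset ℕ).card := le_trans h2 hcard
    refine ⟨Finset.eq_of_subset_of_card_le hsub (le_trans (card4aux x1 x2 x4 x5) h2),
      distinct4aux h4'⟩
  -- pick a base valid quadruple (p, q, r, s)
  obtain ⟨q, hq⟩ := Finset.card_pos.mp (by omega : 0 < (L 1).card)
  obtain ⟨p, hp, hpq⟩ := Finset.exists_mem_ne (by omega : 1 < (L 0).card) q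
  obtain ⟨r, hr, hrq⟩ := Finset.exists_mem_ne (by omega : 1 < (L 3).card) q
  obtain ⟨s, hs, hsr⟩ := Finset.exists_mem_ne (by omega : 1 < (L 4).card) r
  obtain ⟨hL2, dpq, dpr, dps, dqr, dqs, drs⟩ :=
    keyC p hp q hq r hr s hs hpq hrq.symm hsr.symm
  have card2 : ∀ x y : ℕ, ({x, y} : Finset ℕ).card ≤ 2 := by
    intro x y
    have h1 := Finset.card_insert_le x ({y} : Finset ℕ)
    have h3 : ({y} : Finset ℕ).card = 1 := Finset.card_singleton y
    have e1 : ({x, y} : Finset ℕ) = insert x {y} := rfl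
    omega
  -- L 0 = {p, q}
  have hL0 : L 0 = {p, q} := by
    apply Finset.eq_of_subset_of_card_le
    · intro x hx
      by_contra hxn
      simp only [Finset.mem_insert, Finset.mem_singleton, not_or] at hxn
      obtain ⟨hxp, hxq⟩ := hxn
      obtain ⟨hL2', _⟩ := keyC x hx q hq r hr s hs hxq hrq.symm hsr.symm
      have hpm : p ∈ L 2 := by rw [hL2]; simp
      rw [hL2'] at hpm
      simp only [Finset.mem_insert, Finset.mem_singleton] at hpm
      rcases hpm with h | h | h | h
      · exact hxp h.symm
      · exact dpq h
      · exact dpr h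
      · exact dps h
    · have := card2 p q; omega
  -- L 4 = {r, s}
  have hL4 : L 4 = {r, s} := by
    apply Finset.eq_of_subset_of_card_le
    · intro x hx
      by_contra hxn
      simp only [Finset.mem_insert, Finset.mem_singleton, not_or] at hxn
      obtain ⟨hxr, hxs⟩ := hxn
      obtain ⟨hL2', _, _, _, _, _, _⟩ :=
        keyC p hp q hq r hr x hx hpq hrq.symm (fun h => hxr h.symm)
      have hsm : s ∈ L 2 := by rw [hL2]; simp
      rw [hL2'] at hsm
      simp only [Finset.mem_insert, Finset.mem_singleton] at hsm
      rcases hsm with h | h | h | h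
      · exact dps h.symm
      · exact dqs h.symm
      · exact drs h.symm
      · exact hxs h.symm
    · have := card2 r s; omega
  -- L 1 = {p, q}
  have hL1 : L 1 = {p, q} := by
    apply Finset.eq_of_subset_of_card_le
    · intro y hy
      by_contra hyn
      simp only [Finset.mem_insert, Finset.mem_singleton, not_or] at hyn
      obtain ⟨hyp, hyq⟩ := hyn
      obtain ⟨t, ht, hty⟩ := Finset.exists_mem_ne (by omega : 1 < (L 3).card) y
      obtain ⟨u, hu, hut⟩ := Finset.exists_mem_ne (by omega : 1 < (L 4).card) t
      obtain ⟨hL2', _⟩ :=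
        keyC p hp y hy t ht u hu (fun h => hyp h.symm) hty.symm hut.symm
      have hym : y ∈ L 2 := by rw [hL2']; simp
      rw [hL2] at hym
      simp only [Finset.mem_insert, Finset.mem_singleton] at hym
      have hyL4 : y ∈ L 4 := by
        rw [hL4]; simp only [Finset.mem_insert, Finset.mem_singleton]; tauto
      have hsub := key p hp y hy t ht y hyL4 (fun h => hyp h.symm) hty.symm hty
      refine keyR {p, y, t} (hsub.trans ?_) (card3aux p y t)
      intro x hx; simp at hx ⊢; tauto
    · have := card2 p q; omega
  -- L 3 = {r, s}
  have hL3 : L 3 = {r, s} := by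
    apply Finset.eq_of_subset_of_card_le
    · intro y hy
      by_contra hyn
      simp only [Finset.mem_insert, Finset.mem_singleton, not_or] at hyn
      obtain ⟨hyr, hys⟩ := hyn
      have hrL4 : r ∈ L 4 := by rw [hL4]; simp
      by_cases hyp : y = p
      · subst hyp
        have hyL0 : y ∈ L 0 := by rw [hL0]; simp
        have hsub := key y hyL0 q hq y hy r hrL4 dpq dpq.symm (fun h => hyr h)
        refine keyR {y, q, r} (hsub.trans ?_) (card3aux y q r)
        intro x hx; simp at hx ⊢; tauto
      · by_cases hyq : y = q
        · subst hyq
          have hyL0 : y ∈ L 0 := by rw [hL0]; simp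
          have hpL1 : p ∈ L 1 := by rw [hL1]; simp
          have hsub := key y hyL0 p hpL1 y hy r hrL4 (fun h => dpq h.symm)
            (fun h => dpq h) (fun h => hyr h)
          refine keyR {y, p, r} (hsub.trans ?_) (card3aux y p r)
          intro x hx; simp at hx ⊢; tauto
        · obtain ⟨hL2', _⟩ :=
            keyC p hp q hq y hy r hrL4 hpq (fun h => hyq h.symm) (fun h => hyr h)
          have hym : y ∈ L 2 := by rw [hL2']; simp
          rw [hL2] at hym
          simp only [Finset.mem_insert, Finset.mem_singleton] at hym
          tauto
    · have := card2 r s; omega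
  exact ⟨p, q, r, s, dpq, dpr, dps, dqr, dqs, drs, hL0, hL1, hL3, hL4, hL2⟩
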